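/- Let d, ℓ, γ be real numbers with ℓ > 1, ℓ^{-1/2} < γ < 1, 3 + 2ℓ > d, and ℓ < d − 1. Then: (i) for every Y < 0, U_{ΔY}′(Y) > 0 and U_{ΔU}′(Y) > 0; (ii) for every Y with −γ < Y < 0, U_g′(Y) > 0. -/

import Mathlib

noncomputable section

namespace Stmt2

/-- Monotonicity of the roots `U_{ΔY}`, `U_{ΔU}`, `U_g` on the relevant ranges
(Lemma on monotone properties). -/
theorem mono_roots (d ℓ γ : ℝ) (hℓ : 1 < ℓ) (hγl : (Real.sqrt ℓ)⁻¹ < γ) (hγu : γ < 1)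
    (hd1 : d < 3 + 2 * ℓ) (hd2 : ℓ < d - 1) :
    (∀ Y : ℝ, Y < 0 →
        0 < deriv (fun y : ℝ =>
              -((y - 1) * (-(ℓ * γ ^ 2 - 1) - (d + 1 - (d - 1 - 2 * ℓ) * γ) * y
                  + (2 * d - 1 - ℓ) * y ^ 2)) / (d * y - 1)) Y ∧
        0 < deriv (fun y : ℝ =>
              -(-(ℓ * γ ^ 2 - 1) - (d + 1 - (d - 1 - 2 * ℓ) * γ) * y
                  + (2 * d - 1 - ℓ) * y ^ 2) - (d - 1) * y * (1 - y)) Y) ∧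
    (∀ Y : ℝ, -γ < Y → Y < 0 →
        0 < deriv (fun y : ℝ => ℓ * (y + γ) ^ 2 - (1 - y) ^ 2) Y) := by
  -- basic facts
  have hℓ0 : (0:ℝ) < ℓ := by linarith
  have hs : 0 < Real.sqrt ℓ := Real.sqrt_pos.mpr hℓ0
  have hγ0 : 0 < γ := lt_trans (by positivity) hγl
  have hsγ : 1 < γ * Real.sqrt ℓ := by
    rw [inv_eq_one_div] at hγl
    exact (div_lt_iff₀ hs).mp hγl
  have hε : 1 < ℓ * γ ^ 2 := by
    nlinarith [Real.sq_sqrt hℓ0.le, sq_nonneg (γ * Real.sqrt ℓ - 1)]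
  have hd0 : (2:ℝ) < d := by linarith
  constructor
  · intro Y hY
    have hYid : HasDerivAt (fun y : ℝ => y) 1 Y := hasDerivAt_id Y
    have hf : HasDerivAt
        (fun y : ℝ => -(ℓ * γ ^ 2 - 1) - (d + 1 - (d - 1 - 2 * ℓ) * γ) * y
            + (2 * d - 1 - ℓ) * y ^ 2)
        (-(d + 1 - (d - 1 - 2 * ℓ) * γ) * 1 + (2 * d - 1 - ℓ) * (2 * Y)) Y := by
      have h2 : HasDerivAt (fun y : ℝ => y ^ 2) (2 * Y) Y := by
        simpa using (hasDerivAt_pow 2 Y)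
      have := ((hasDerivAt_const Y (-(ℓ * γ ^ 2 - 1))).sub
        (hYid.const_mul (d + 1 - (d - 1 - 2 * ℓ) * γ))).add (h2.const_mul (2 * d - 1 - ℓ))
      exact this.congr_deriv (by ring)
    have hfv := hf
    constructor
    · -- the rational function
      have hnum : HasDerivAt
          (fun y : ℝ => -((y - 1) * (-(ℓ * γ ^ 2 - 1) - (d + 1 - (d - 1 - 2 * ℓ) * γ) * y
              + (2 * d - 1 - ℓ) * y ^ 2)))
          (-(1 * (-(ℓ * γ ^ 2 - 1) - (d + 1 - (d - 1 - 2 * ℓ) * γ) * Y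
              + (2 * d - 1 - ℓ) * Y ^ 2)
            + (Y - 1) * (-(d + 1 - (d - 1 - 2 * ℓ) * γ) * 1 + (2 * d - 1 - ℓ) * (2 * Y)))) Y :=
        ((hYid.sub_const 1).mul hf).neg
      have hden : HasDerivAt (fun y : ℝ => d * y - 1) d Y := by
        simpa using (hYid.const_mul d).sub_const 1
      have hdneg : d * Y - 1 < 0 := by nlinarith
      have hne : d * Y - 1 ≠ 0 := ne_of_lt hdneg
      have hdiv := hnum.div hden hne
      erw [hdiv.deriv]
      have hden2 : 0 < (d * Y - 1) ^ 2 := by nlinarith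
      apply div_pos _ hden2
      -- sign facts of the coefficients of the numerator polynomial
      have hc0 : 0 < 2 + γ + 2*ℓ*γ - ℓ*γ^2 - d*γ + d*ℓ*γ^2 := by
        nlinarith [mul_pos (sub_pos.2 hε) (show (0:ℝ) < d - 1 by linarith),
          mul_pos hγ0 (show (0:ℝ) < 3 + 2*ℓ - d by linarith)]
      have hc1 : -2*γ + 2*ℓ - 4*ℓ*γ - 6*d + 2*d*γ < 0 := by
        nlinarith [mul_pos hγ0 (show (0:ℝ) < 3 + 2*ℓ - d by linarith)]
      have hc2 : 0 < -3 - 3*ℓ + 6*d + d*γ - d*ℓ + 2*d*ℓ*γ + 3*d^2 - d^2*γ := by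
        nlinarith [mul_pos (mul_pos (show (0:ℝ) < d by linarith) (show (0:ℝ) < d by linarith))
            (show (0:ℝ) < 1 - γ by linarith),
          mul_pos (show (0:ℝ) < d by linarith) (show (0:ℝ) < d - ℓ - 1 by linarith),
          mul_pos (show (0:ℝ) < d by linarith) hγ0,
          mul_pos (mul_pos (show (0:ℝ) < d by linarith) hℓ0) hγ0,
          mul_pos (show (0:ℝ) < d - ℓ - 1 by linarith) (show (0:ℝ) < ℓ + 8 by linarith)]
      have hc3 : 2*d + 2*d*ℓ - 4*d^2 < 0 := by
        nlinarith [mul_pos (show (0:ℝ) < d by linarith) (show (0:ℝ) < 2*d - ℓ - 1 by linarith)]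
      have hY2 : 0 < Y ^ 2 := by nlinarith
      nlinarith [hc0, mul_pos (neg_pos.2 hc1) (neg_pos.2 hY), mul_pos hc2 hY2,
        mul_pos (mul_pos (neg_pos.2 hc3) (neg_pos.2 hY)) hY2]
    · -- the polynomial function
      have hq : HasDerivAt (fun y : ℝ => (d - 1) * y * (1 - y))
          ((d - 1) * (1 - Y) + (d - 1) * Y * (-1)) Y := by
        have h5 : HasDerivAt (fun y : ℝ => (d - 1) * y) (d - 1) Y := by
          simpa using hYid.const_mul (d - 1)
        have h6 : HasDerivAt (fun y : ℝ => 1 - y) (-1) Y := by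
          simpa using hYid.const_sub 1
        exact h5.mul h6
      have htot := hfv.neg.sub hq
      erw [htot.deriv]
      nlinarith [mul_pos hγ0 (show (0:ℝ) < 3 + 2*ℓ - d by linarith),
        mul_pos (show (0:ℝ) < d - ℓ by linarith) (neg_pos.2 hY)]
  · intro Y hYl hYu
    have hYid : HasDerivAt (fun y : ℝ => y) 1 Y := hasDerivAt_id Y
    have h7 : HasDerivAt (fun y : ℝ => ℓ * (y + γ) ^ 2) (ℓ * ((2:ℕ) * (Y + γ) ^ 1 * 1)) Y :=
      (((hYid.add_const γ).pow 2)).const_mul ℓ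
    have h8 : HasDerivAt (fun y : ℝ => (1 - y) ^ 2) ((2:ℕ) * (1 - Y) ^ 1 * (-1)) Y :=
      (hYid.const_sub 1).pow 2
    have htot := h7.sub h8
    erw [htot.deriv]
    have h9 : 0 < Y + γ := by linarith
    push_cast
    nlinarith [mul_pos hℓ0 h9]

end Stmt2
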